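/- Let H = H₀ ⊕ H₁ be an orthogonal decomposition of a finite-dimensional inner product space and let X be a self-adjoint linear operator on H with blocks Xᵢⱼ, such that X₁₁ ≥ 0 and ker X₁₁ ⊆ ker X₀₁. Then for every u ∈ H₀, ⟨u, (X₀₀ − X₀₁X₁₁⁺X₁₀)u⟩ equals the minimum over v ∈ H₁ of ⟨u + v, X(u + v)⟩ (these inner products are real), the set of minimizers is exactly { −X₁₁⁺X₁₀u + v₁ : v₁ ∈ ker X₁₁ }, and X₀₀ − X₀₁X₁₁⁺X₁₀ ≤ X₀₀. If moreover X ≥ 0, then 0 ≤ X₀₀ − X₀₁X₁₁⁺X₁₀ ≤ X₀₀. -/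

import Mathlib

/-- The generalized Schur complement `X₀₀ - X₀₁ X₁₁⁺ X₁₀` of an operator `X` on
`H = H₀ ⊕ H₁` (orthogonal projections `P0, P1`), where `B` is the Moore–Penrose
pseudoinverse of the block `X₁₁ = P1 X P1`. -/
noncomputable def gschurLM {𝕂 : Type*} [RCLike 𝕂] {H : Type*} [NormedAddCommGroup H]
    [InnerProductSpace 𝕂 H] (P0 P1 X B : H →ₗ[𝕂] H) : H →ₗ[𝕂] H :=
  (P0 ∘ₗ (X ∘ₗ P0)) - (P0 ∘ₗ (X ∘ₗ P1)) ∘ₗ (B ∘ₗ (P1 ∘ₗ (X ∘ₗ P0)))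

/-- Generalized Schur complement minimization principle: for a
self-adjoint operator `X` on a finite-dimensional inner 𝕂 product space `H = H₀ ⊕ H₁`
(orthogonal projections `P0, P1`, blocks `Xᵢⱼ = Pᵢ X Pⱼ`), with `X₁₁ ≥ 0`,
`ker X₁₁ ⊆ ker X₀₁`, and `B = X₁₁⁺` the Moore–Penrose pseudoinverse of `X₁₁`: for every
`u ∈ H₀`, `⟨u, (X/X₁₁)u⟩` is the minimum of `⟨u+v, X(u+v)⟩` over `v ∈ H₁`, the set of
minimizers is `{-X₁₁⁺X₁₀u + v₁ : v₁ ∈ ker X₁₁}`, and `X/X₁₁ ≤ X₀₀`; and if moreover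
`X ≥ 0` then `0 ≤ X/X₁₁ ≤ X₀₀`. -/
theorem stmt_9
    {𝕂 : Type*} [RCLike 𝕂]
    {H : Type*} [NormedAddCommGroup H] [InnerProductSpace 𝕂 H] [FiniteDimensional 𝕂 H]
    (P0 P1 : H →ₗ[𝕂] H)
    (hP0 : P0 ∘ₗ P0 = P0) (hP0sa : LinearMap.adjoint P0 = P0)
    (hP1 : P1 ∘ₗ P1 = P1) (hP1sa : LinearMap.adjoint P1 = P1)
    (hsum : P0 + P1 = 1)
    (X : H →ₗ[𝕂] H) (hXsa : LinearMap.adjoint X = X)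
    (hX11pos : ∀ x : H, 0 ≤ RCLike.re (inner 𝕂 x ((P1 ∘ₗ (X ∘ₗ P1)) x) : 𝕂))
    (hker : LinearMap.ker (P1 ∘ₗ (X ∘ₗ P1)) ≤ LinearMap.ker (P0 ∘ₗ (X ∘ₗ P1)))
    (B : H →ₗ[𝕂] H)
    (hB1 : B ∘ₗ ((P1 ∘ₗ (X ∘ₗ P1)) ∘ₗ B) = B)
    (hB2 : (P1 ∘ₗ (X ∘ₗ P1)) ∘ₗ (B ∘ₗ (P1 ∘ₗ (X ∘ₗ P1))) = P1 ∘ₗ (X ∘ₗ P1))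
    (hB3 : LinearMap.adjoint (B ∘ₗ (P1 ∘ₗ (X ∘ₗ P1))) = B ∘ₗ (P1 ∘ₗ (X ∘ₗ P1)))
    (hB4 : LinearMap.adjoint ((P1 ∘ₗ (X ∘ₗ P1)) ∘ₗ B) = (P1 ∘ₗ (X ∘ₗ P1)) ∘ₗ B) :
    (∀ u : H, P0 u = u →
      IsLeast {r : ℝ | ∃ v : H, P1 v = v ∧ r = RCLike.re (inner 𝕂 (u + v) (X (u + v)) : 𝕂)}
        (RCLike.re (inner 𝕂 u (gschurLM P0 P1 X B u) : 𝕂)) ∧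
      (∀ v : H, P1 v = v →
        (RCLike.re (inner 𝕂 (u + v) (X (u + v)) : 𝕂) =
            RCLike.re (inner 𝕂 u (gschurLM P0 P1 X B u) : 𝕂) ↔
          ∃ v₁ : H, P1 v₁ = v₁ ∧ (P1 ∘ₗ (X ∘ₗ P1)) v₁ = 0 ∧
            v = -(B ((P1 ∘ₗ (X ∘ₗ P0)) u)) + v₁))) ∧
    (∀ z : H, RCLike.re (inner 𝕂 z (gschurLM P0 P1 X B z) : 𝕂) ≤
      RCLike.re (inner 𝕂 z ((P0 ∘ₗ (X ∘ₗ P0)) z) : 𝕂)) ∧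
    ((∀ x : H, 0 ≤ RCLike.re (inner 𝕂 x (X x) : 𝕂)) →
      (∀ z : H, 0 ≤ RCLike.re (inner 𝕂 z (gschurLM P0 P1 X B z) : 𝕂)) ∧
      (∀ z : H, RCLike.re (inner 𝕂 z (gschurLM P0 P1 X B z) : 𝕂) ≤
        RCLike.re (inner 𝕂 z ((P0 ∘ₗ (X ∘ₗ P0)) z) : 𝕂))) := by
  set S : H →ₗ[𝕂] H := P1 ∘ₗ (X ∘ₗ P1) with hSdef
  have hSsa : LinearMap.adjoint S = S := by
    simp only [hSdef, LinearMap.adjoint_comp, hP1sa, hXsa, LinearMap.comp_assoc]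
  have hP0p : ∀ x, P0 (P0 x) = P0 x := fun x => by
    have := LinearMap.congr_fun hP0 x; simpa using this
  have hP1p : ∀ x, P1 (P1 x) = P1 x := fun x => by
    have := LinearMap.congr_fun hP1 x; simpa using this
  have hP0move : ∀ a b : H, (inner 𝕂 (P0 a) b : 𝕂) = inner 𝕂 a (P0 b) := fun a b => by
    nth_rewrite 1 [← hP0sa]
    exact LinearMap.adjoint_inner_left P0 b a
  have hP1move : ∀ a b : H, (inner 𝕂 (P1 a) b : 𝕂) = inner 𝕂 a (P1 b) := fun a b => by
    nth_rewrite 1 [← hP1sa]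
    exact LinearMap.adjoint_inner_left P1 b a
  have hXmove : ∀ a b : H, (inner 𝕂 (X a) b : 𝕂) = inner 𝕂 a (X b) := fun a b => by
    nth_rewrite 1 [← hXsa]
    exact LinearMap.adjoint_inner_left X b a
  have hSmove : ∀ a b : H, (inner 𝕂 (S a) b : 𝕂) = inner 𝕂 a (S b) := fun a b => by
    nth_rewrite 1 [← hSsa]
    exact LinearMap.adjoint_inner_left S b a
  have hresymm : ∀ a b : H, RCLike.re (inner 𝕂 a b : 𝕂) = RCLike.re (inner 𝕂 b a : 𝕂) := by
    intro a b
    rw [← inner_conj_symm b a, RCLike.conj_re]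
  have hSapp : ∀ x : H, S x = P1 (X (P1 x)) := fun x => by simp [hSdef]
  -- `y u := P1 (X (P0 u))` lies in the range of `S`
  have hyrange : ∀ u : H, P1 (X (P0 u)) ∈ LinearMap.range S := by
    intro u
    rw [← Submodule.orthogonal_orthogonal (LinearMap.range S),
      Submodule.mem_orthogonal]
    intro w hw
    have hSw : S w = 0 := by
      have h1 : (inner 𝕂 (S (S w)) w : 𝕂) = 0 :=
        (Submodule.mem_orthogonal _ w).mp hw (S (S w)) ⟨S w, rfl⟩
      have h2 : (inner 𝕂 (S w) (S w) : 𝕂) = 0 := by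
        rw [← hSmove (S w) w]
        exact h1
      exact inner_self_eq_zero.mp h2
    have hker' : P0 (X (P1 w)) = 0 := by
      have hmem : w ∈ LinearMap.ker S := LinearMap.mem_ker.mpr hSw
      have := hker hmem
      simpa using this
    calc (inner 𝕂 w (P1 (X (P0 u))) : 𝕂)
        = inner 𝕂 (P1 w) (X (P0 u)) := (hP1move w _).symm
      _ = inner 𝕂 (X (P1 w)) (P0 u) := (hXmove (P1 w) (P0 u)).symm
      _ = inner 𝕂 (P0 (X (P1 w))) u := (hP0move _ u).symm
      _ = 0 := by rw [hker']; simp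
  have hSB : ∀ u : H, S (B (P1 (X (P0 u)))) = P1 (X (P0 u)) := by
    intro u
    obtain ⟨s, hs⟩ := hyrange u
    rw [← hs]
    have := LinearMap.congr_fun hB2 s
    simpa using this
  have hP1B : ∀ u : H, P1 (B (P1 (X (P0 u)))) = B (P1 (X (P0 u))) := by
    intro u
    obtain ⟨s, hs⟩ := hyrange u
    have hBS : B ∘ₗ S = S ∘ₗ LinearMap.adjoint B := by
      conv_lhs => rw [← hB3]
      rw [LinearMap.adjoint_comp, hSsa]
    have h1 : B (S s) = S (LinearMap.adjoint B s) := by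
      have := LinearMap.congr_fun hBS s
      simpa using this
    rw [← hs, h1, hSapp, hP1p]
  -- positive semidefiniteness: zero diagonal implies zero
  have hpsd_zero : ∀ w : H, RCLike.re (inner 𝕂 w (S w) : 𝕂) = 0 → S w = 0 := by
    intro w hw0
    by_contra hne
    have hN : (0 : ℝ) < RCLike.re (inner 𝕂 (S w) (S w) : 𝕂) := by
      rw [inner_self_eq_norm_sq]
      exact pow_pos (norm_pos_iff.mpr hne) 2
    set N : ℝ := RCLike.re (inner 𝕂 (S w) (S w) : 𝕂) with hNdef
    set M : ℝ := RCLike.re (inner 𝕂 (S w) (S (S w)) : 𝕂) with hMdef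
    have hM : 0 ≤ M := hX11pos (S w)
    set c : ℝ := N / (M + 1) with hcdef
    have hc : 0 < c := by positivity
    have hcM : c * (M + 1) = N := by
      rw [hcdef, div_mul_cancel₀ _ (ne_of_gt (by linarith))]
    have hwSSw : RCLike.re (inner 𝕂 w (S (S w)) : 𝕂) = N := by
      rw [← hSmove w (S w)]
    have hSww : RCLike.re (inner 𝕂 (S w) w : 𝕂) = 0 := by
      rw [hresymm]; exact hw0
    have hexp : RCLike.re (inner 𝕂 (w - (c : 𝕂) • S w) (S (w - (c : 𝕂) • S w)) : 𝕂)
        = RCLike.re (inner 𝕂 w (S w) : 𝕂) - c * RCLike.re (inner 𝕂 w (S (S w)) : 𝕂)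
          - c * RCLike.re (inner 𝕂 (S w) (S w) : 𝕂)
          + c * c * RCLike.re (inner 𝕂 (S w) (S (S w)) : 𝕂) := by
      rw [map_sub, map_smul]
      simp only [inner_sub_left, inner_sub_right, inner_smul_left, inner_smul_right,
        map_sub, RCLike.conj_ofReal, RCLike.re_ofReal_mul, RCLike.smul_re,
        smul_eq_mul, RCLike.mul_re, RCLike.ofReal_re, RCLike.ofReal_im]
      ring
    have hpos := hX11pos (w - (c : 𝕂) • S w)
    rw [hexp, hw0, hwSSw, ← hNdef, ← hMdef] at hpos
    nlinarith [mul_pos hc hN, mul_pos (mul_pos hc hc) (lt_of_lt_of_le zero_lt_one (by linarith : (1:ℝ) ≤ M + 1)), mul_nonneg (mul_nonneg hc.le hc.le) hM]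
  -- value of the Schur form
  have hGu : ∀ u : H, P0 u = u →
      RCLike.re (inner 𝕂 u (gschurLM P0 P1 X B u) : 𝕂)
        = RCLike.re (inner 𝕂 u (X u) : 𝕂)
          - RCLike.re (inner 𝕂 (B (P1 (X (P0 u)))) (S (B (P1 (X (P0 u))))) : 𝕂) := by
    intro u hu
    have hg : gschurLM P0 P1 X B u
        = P0 (X (P0 u)) - P0 (X (P1 (B (P1 (X (P0 u)))))) := by
      simp [gschurLM, LinearMap.sub_apply, LinearMap.comp_apply, hSdef]
    have e1 : (inner 𝕂 u (P0 (X (P0 u))) : 𝕂) = inner 𝕂 u (X u) := by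
      rw [← hP0move, hu]
    have e2 : (inner 𝕂 u (P0 (X (P1 (B (P1 (X (P0 u))))))) : 𝕂)
        = inner 𝕂 (B (P1 (X (P0 u)))) (S (B (P1 (X (P0 u))))) := by
      calc (inner 𝕂 u (P0 (X (P1 (B (P1 (X (P0 u))))))) : 𝕂)
          = inner 𝕂 (P0 u) (X (P1 (B (P1 (X (P0 u)))))) := (hP0move u _).symm
        _ = inner 𝕂 u (X (P1 (B (P1 (X (P0 u)))))) := by rw [hu]
        _ = inner 𝕂 (X u) (P1 (B (P1 (X (P0 u))))) := (hXmove u _).symm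
        _ = inner 𝕂 (P1 (X u)) (B (P1 (X (P0 u)))) := (hP1move (X u) _).symm
        _ = inner 𝕂 (P1 (X (P0 u))) (B (P1 (X (P0 u)))) := by
            conv_lhs => rw [← hu]
            rw [hP0p]
        _ = inner 𝕂 (S (B (P1 (X (P0 u))))) (B (P1 (X (P0 u)))) := by rw [hSB u]
        _ = inner 𝕂 (B (P1 (X (P0 u)))) (S (B (P1 (X (P0 u))))) := hSmove _ _
    rw [hg, inner_sub_right, map_sub, e1, e2]
  -- the key quadratic identity
  have key : ∀ u v : H, P0 u = u → P1 v = v →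
      RCLike.re (inner 𝕂 (u + v) (X (u + v)) : 𝕂)
        = RCLike.re (inner 𝕂 u (gschurLM P0 P1 X B u) : 𝕂)
          + RCLike.re (inner 𝕂 (v + B (P1 (X (P0 u))))
              (S (v + B (P1 (X (P0 u))))) : 𝕂) := by
    intro u v hu hv
    have hty : S (B (P1 (X (P0 u)))) = P1 (X (P0 u)) := hSB u
    have hcross : ∀ a : H, P1 a = a →
        (inner 𝕂 a (X u) : 𝕂) = inner 𝕂 a (P1 (X (P0 u))) := by
      intro a ha
      conv_lhs => rw [← ha, ← hu]
      rw [hP1move]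
    have c1 : (inner 𝕂 v (X u) : 𝕂) = inner 𝕂 v (P1 (X (P0 u))) := hcross v hv
    have c2 : RCLike.re (inner 𝕂 u (X v) : 𝕂) = RCLike.re (inner 𝕂 v (P1 (X (P0 u))) : 𝕂) := by
      rw [hresymm u (X v), hXmove v u, c1]
    have c3 : (inner 𝕂 v (X v) : 𝕂) = inner 𝕂 v (S v) := by
      calc (inner 𝕂 v (X v) : 𝕂) = inner 𝕂 (P1 v) (X (P1 v)) := by rw [hv]
        _ = inner 𝕂 v (P1 (X (P1 v))) := hP1move _ _
        _ = inner 𝕂 v (S v) := by rw [← hSapp]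
    have expand : RCLike.re (inner 𝕂 (u + v) (X (u + v)) : 𝕂)
        = RCLike.re (inner 𝕂 u (X u) : 𝕂) + RCLike.re (inner 𝕂 u (X v) : 𝕂)
          + RCLike.re (inner 𝕂 v (X u) : 𝕂) + RCLike.re (inner 𝕂 v (X v) : 𝕂) := by
      simp only [map_add, inner_add_left, inner_add_right]
      ring
    have expand2 : RCLike.re (inner 𝕂 (v + B (P1 (X (P0 u))))
          (S (v + B (P1 (X (P0 u))))) : 𝕂)
        = RCLike.re (inner 𝕂 v (S v) : 𝕂)
          + RCLike.re (inner 𝕂 v (S (B (P1 (X (P0 u))))) : 𝕂)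
          + RCLike.re (inner 𝕂 (B (P1 (X (P0 u)))) (S v) : 𝕂)
          + RCLike.re (inner 𝕂 (B (P1 (X (P0 u)))) (S (B (P1 (X (P0 u))))) : 𝕂) := by
      simp only [map_add, inner_add_left, inner_add_right]
      ring
    have d1 : RCLike.re (inner 𝕂 v (S (B (P1 (X (P0 u))))) : 𝕂)
        = RCLike.re (inner 𝕂 v (P1 (X (P0 u))) : 𝕂) := by rw [hty]
    have d2 : RCLike.re (inner 𝕂 (B (P1 (X (P0 u)))) (S v) : 𝕂)
        = RCLike.re (inner 𝕂 v (P1 (X (P0 u))) : 𝕂) := by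
      rw [← hSmove, hty, hresymm]
    rw [expand, expand2, hGu u hu, d1, d2, c1, c2]
    have := RCLike.conj_re (inner 𝕂 v (X v) : 𝕂)
    rw [c3]
    ring
  -- the second statement (Schur ≤ X₀₀), proved for all z
  have part2 : ∀ z : H, RCLike.re (inner 𝕂 z (gschurLM P0 P1 X B z) : 𝕂) ≤
      RCLike.re (inner 𝕂 z ((P0 ∘ₗ (X ∘ₗ P0)) z) : 𝕂) := by
    intro z
    have hGred : RCLike.re (inner 𝕂 z (gschurLM P0 P1 X B z) : 𝕂)
        = RCLike.re (inner 𝕂 (P0 z) (gschurLM P0 P1 X B (P0 z)) : 𝕂) := by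
      have h1 : gschurLM P0 P1 X B z = gschurLM P0 P1 X B (P0 z) := by
        simp [gschurLM, LinearMap.sub_apply, LinearMap.comp_apply, hP0p]
      have h2 : (inner 𝕂 z (gschurLM P0 P1 X B z) : 𝕂)
          = inner 𝕂 (P0 z) (gschurLM P0 P1 X B z) := by
        have hg : gschurLM P0 P1 X B z
            = P0 (X (P0 z) - X (P1 (B (P1 (X (P0 z)))))) := by
          simp [gschurLM, LinearMap.sub_apply, LinearMap.comp_apply, map_sub]
        conv_lhs => rw [hg]
        conv_rhs => rw [hg]
        rw [← hP0move z, ← hP0move (P0 z), hP0p]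
      rw [h2, h1]
    have hX00red : RCLike.re (inner 𝕂 z ((P0 ∘ₗ (X ∘ₗ P0)) z) : 𝕂)
        = RCLike.re (inner 𝕂 (P0 z) (X (P0 z)) : 𝕂) := by
      have h3 : (inner 𝕂 z ((P0 ∘ₗ (X ∘ₗ P0)) z) : 𝕂) = inner 𝕂 (P0 z) (X (P0 z)) := by
        simp only [LinearMap.comp_apply]
        rw [← hP0move z (X (P0 z))]
      rw [h3]
    have hu0 : P0 (P0 z) = P0 z := hP0p z
    have hd : 0 ≤ RCLike.re (inner 𝕂 (B (P1 (X (P0 (P0 z)))))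
        (S (B (P1 (X (P0 (P0 z)))))) : 𝕂) := hX11pos _
    rw [hGred, hX00red, hGu (P0 z) hu0]
    linarith
  refine ⟨?_, part2, ?_⟩
  · intro u hu
    have hP1t : P1 (B (P1 (X (P0 u)))) = B (P1 (X (P0 u))) := hP1B u
    constructor
    · constructor
      · refine ⟨-(B (P1 (X (P0 u)))), by rw [map_neg, hP1t], ?_⟩
        have := key u (-(B (P1 (X (P0 u))))) hu (by rw [map_neg, hP1t])
        rw [this]
        simp
      · rintro r ⟨v, hv, rfl⟩
        rw [key u v hu hv]
        have := hX11pos (v + B (P1 (X (P0 u))))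
        linarith
    · intro v hv
      simp only [LinearMap.comp_apply]
      constructor
      · intro heq
        have h0 : RCLike.re (inner 𝕂 (v + B (P1 (X (P0 u))))
            (S (v + B (P1 (X (P0 u))))) : 𝕂) = 0 := by
          have := key u v hu hv
          rw [heq] at this
          linarith
        have hS0 := hpsd_zero _ h0
        refine ⟨v + B (P1 (X (P0 u))), ?_, ?_, by abel⟩
        · rw [map_add, hv, hP1t]
        · exact hS0
      · rintro ⟨v₁, hv₁P, hv₁S, rfl⟩
        rw [key u _ hu hv]
        have hveq : -(B (P1 (X (P0 u)))) + v₁ + B (P1 (X (P0 u))) = v₁ := by abel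
        rw [hveq]
        rw [hv₁S]
        simp
  · intro hXpos
    refine ⟨?_, part2⟩
    intro z
    have hu0 : P0 (P0 z) = P0 z := hP0p z
    have hGred : RCLike.re (inner 𝕂 z (gschurLM P0 P1 X B z) : 𝕂)
        = RCLike.re (inner 𝕂 (P0 z) (gschurLM P0 P1 X B (P0 z)) : 𝕂) := by
      have h1 : gschurLM P0 P1 X B z = gschurLM P0 P1 X B (P0 z) := by
        simp [gschurLM, LinearMap.sub_apply, LinearMap.comp_apply, hP0p]
      have h2 : (inner 𝕂 z (gschurLM P0 P1 X B z) : 𝕂)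
          = inner 𝕂 (P0 z) (gschurLM P0 P1 X B z) := by
        have hg : gschurLM P0 P1 X B z
            = P0 (X (P0 z) - X (P1 (B (P1 (X (P0 z)))))) := by
          simp [gschurLM, LinearMap.sub_apply, LinearMap.comp_apply, map_sub]
        conv_lhs => rw [hg]
        conv_rhs => rw [hg]
        rw [← hP0move z, ← hP0move (P0 z), hP0p]
      rw [h2, h1]
    rw [hGred]
    have hkey := key (P0 z) (-(B (P1 (X (P0 (P0 z)))))) hu0
      (by rw [map_neg, hP1B (P0 z)])
    rw [neg_add_cancel] at hkey
    simp only [map_zero, inner_zero_right, map_zero, add_zero] at hkey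
    rw [← hkey]
    exact hXpos _
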